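/- Let p > 2, N ≥ 1, and ε, η, K > 0. For ξ ∈ ℝᴺ \ {0} define the symmetric matrix B(ξ) = |ξ|^{(p−2)/2}(Id + (√(p−1) − 1) ξξᵀ/|ξ|²) and F(ξ, X) = −Tr(B(ξ)B(ξ)ᵀ X) for X in the space S(N) of real symmetric N×N matrices (so that F(Du, D²u) = −div(|Du|^{p−2}Du) for smooth u with Du ≠ 0). If X, Y ∈ S(N) satisfy the block matrix inequality (X, 0; 0, −Y) ≤ (K/ε²)(Id, −Id; −Id, Id) + Kη·Id on ℝ^{2N}, then for all nonzero ξ₁, ξ₂ ∈ ℝᴺ: F(ξ₂, Y) − F(ξ₁, X) ≤ (K/ε²) Tr((B(ξ₁) − B(ξ₂))ᵀ(B(ξ₁) − B(ξ₂))) + Kη (Tr(B(ξ₁)ᵀB(ξ₁)) + Tr(B(ξ₂)ᵀB(ξ₂))). -/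

import Mathlib

open scoped Matrix

noncomputable section

lemma trace_nonneg_of_psd {n : Type*} [Fintype n] [DecidableEq n] {M : Matrix n n ℝ}
    (h : M.PosSemidef) : 0 ≤ M.trace := by
  rw [Matrix.trace]
  refine Finset.sum_nonneg fun i _ => ?_
  exact h.diag_nonneg

lemma trace_fromBlocks' {n m : Type*} [Fintype n] [Fintype m]
    (A : Matrix n n ℝ) (B : Matrix n m ℝ) (C : Matrix m n ℝ) (D : Matrix m m ℝ) :
    (Matrix.fromBlocks A B C D).trace = A.trace + D.trace := by
  simp [Matrix.trace, Matrix.diag, Fintype.sum_sum_type]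

/-- The Euclidean norm of a vector `ξ ∈ ℝᴺ`. -/
def nrmV {N : ℕ} (ξ : Fin N → ℝ) : ℝ := Real.sqrt (∑ i, ξ i ^ 2)

/-- `B(ξ) = |ξ|^{(p-2)/2} (Id + (√(p-1) - 1) ξξᵀ/|ξ|²)`. -/
def Bmat {N : ℕ} (p : ℝ) (ξ : Fin N → ℝ) : Matrix (Fin N) (Fin N) ℝ :=
  (nrmV ξ) ^ ((p - 2) / 2) •
    ((1 : Matrix (Fin N) (Fin N) ℝ) +
      (Real.sqrt (p - 1) - 1) • (((nrmV ξ) ^ 2)⁻¹ • Matrix.vecMulVec ξ ξ))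

/-- `F(ξ, X) = -Tr(B(ξ) B(ξ)ᵀ X)`, so that `F(Du, D²u) = -div(|Du|^{p-2}Du)`. -/
def Fop {N : ℕ} (p : ℝ) (ξ : Fin N → ℝ) (X : Matrix (Fin N) (Fin N) ℝ) : ℝ :=
  -(Bmat p ξ * (Bmat p ξ)ᵀ * X).trace

/-- The structure inequality for the `p`-Laplace operator used
to verify Barles' condition (H5-1): if `(X, 0; 0, -Y) ≤ (K/ε²)(Id, -Id; -Id, Id) + Kη·Id`
in the Loewner order on symmetric `2N×2N` matrices, then for all nonzero
`ξ₁, ξ₂ ∈ ℝᴺ`,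
`F(ξ₂,Y) - F(ξ₁,X) ≤ (K/ε²) Tr((B(ξ₁)-B(ξ₂))ᵀ(B(ξ₁)-B(ξ₂)))
  + Kη (Tr(B(ξ₁)ᵀB(ξ₁)) + Tr(B(ξ₂)ᵀB(ξ₂)))`. -/
theorem statement19 {N : ℕ} (hN : 1 ≤ N) (p ε η K : ℝ)
    (hp : 2 < p) (hε : 0 < ε) (hη : 0 < η) (hK : 0 < K)
    (X Y : Matrix (Fin N) (Fin N) ℝ) (hX : X.IsSymm) (hY : Y.IsSymm)
    (hblock : ((K / ε ^ 2) •
          Matrix.fromBlocks (1 : Matrix (Fin N) (Fin N) ℝ) (-1) (-1) 1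
        + (K * η) • (1 : Matrix (Fin N ⊕ Fin N) (Fin N ⊕ Fin N) ℝ)
        - Matrix.fromBlocks X 0 0 (-Y)).PosSemidef)
    (ξ₁ ξ₂ : Fin N → ℝ) (h₁ : ξ₁ ≠ 0) (h₂ : ξ₂ ≠ 0) :
    Fop p ξ₂ Y - Fop p ξ₁ X ≤
      K / ε ^ 2 * ((Bmat p ξ₁ - Bmat p ξ₂)ᵀ * (Bmat p ξ₁ - Bmat p ξ₂)).trace
        + K * η * (((Bmat p ξ₁)ᵀ * Bmat p ξ₁).trace + ((Bmat p ξ₂)ᵀ * Bmat p ξ₂).trace) := by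
  set B₁ := Bmat p ξ₁ with hB₁
  set B₂ := Bmat p ξ₂ with hB₂
  set C : Matrix (Fin N ⊕ Fin N) (Fin N ⊕ Fin N) ℝ := Matrix.fromBlocks B₁ᵀ B₂ᵀ 0 0 with hC
  have h0 : 0 ≤ (C * _ * Cᴴ).trace :=
    trace_nonneg_of_psd (hblock.mul_mul_conjTranspose_same C)
  rw [Matrix.conjTranspose_eq_transpose_of_trivial, Matrix.trace_mul_cycle] at h0
  have hP : Cᵀ * C = Matrix.fromBlocks (B₁*B₁ᵀ) (B₁*B₂ᵀ) (B₂*B₁ᵀ) (B₂*B₂ᵀ) := by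
    rw [hC, Matrix.fromBlocks_transpose, Matrix.fromBlocks_multiply]
    simp
  rw [hP] at h0
  rw [Matrix.mul_sub, Matrix.mul_add, Matrix.mul_smul, Matrix.mul_smul, Matrix.mul_one,
    Matrix.fromBlocks_multiply, Matrix.fromBlocks_multiply] at h0
  simp only [Matrix.trace_sub, Matrix.trace_add, Matrix.trace_smul, trace_fromBlocks',
    Matrix.mul_zero, Matrix.zero_mul, add_zero, zero_add, Matrix.mul_one,
    Matrix.mul_neg, Matrix.trace_neg, smul_eq_mul, Matrix.trace_add] at h0
  have e1 : (B₁ * B₁ᵀ).trace = (B₁ᵀ * B₁).trace := Matrix.trace_mul_comm _ _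
  have e2 : (B₂ * B₂ᵀ).trace = (B₂ᵀ * B₂).trace := Matrix.trace_mul_comm _ _
  have e3 : (B₁ * B₂ᵀ).trace = (B₂ᵀ * B₁).trace := Matrix.trace_mul_comm _ _
  have e4 : (B₂ * B₁ᵀ).trace = (B₁ᵀ * B₂).trace := Matrix.trace_mul_comm _ _
  have erhs : ((B₁ - B₂)ᵀ * (B₁ - B₂)).trace
      = (B₁ᵀ * B₁).trace - (B₁ᵀ * B₂).trace - (B₂ᵀ * B₁).trace + (B₂ᵀ * B₂).trace := by
    simp only [Matrix.transpose_sub, Matrix.sub_mul, Matrix.mul_sub, Matrix.trace_sub]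
    ring
  simp only [Fop, ← hB₁, ← hB₂]
  rw [erhs]
  rw [e1, e2, e3, e4] at h0
  nlinarith [h0]

end
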